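/- arXiv:1901.00201 — 7 statements merged into one kernel-verified Lean document; each statement's English description precedes it below -/
import Mathlib

section
/- Let H be a real Hilbert space, let D : H →L[ℝ] H be a self-adjoint bounded linear operator with ⟪D x, x⟫ ≥ 0 for all x ∈ H, and let δ > 0, α > 0, τ > 0, s ≥ 0, σ ≥ 1/2 be real numbers. If u, v ∈ H satisfy the two-level scheme equation (s·D + δ·I)(u − v) + (τ·α)·D(σ·u + (1−σ)·v) = 0, then ‖u‖ ≤ ‖v‖. -/
set_option maxHeartbeats 1000000 in
theorem two_level_scheme_step_stability
    {H : Type*} [NormedAddCommGroup H] [InnerProductSpace ℝ H] [CompleteSpace H]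
    (D : H →L[ℝ] H) (hD : IsSelfAdjoint D)
    (hDpos : ∀ x : H, 0 ≤ (inner ℝ (D x) x : ℝ))
    (δ α τ s σ : ℝ) (hδ : 0 < δ) (hα : 0 < α) (hτ : 0 < τ)
    (hs : 0 ≤ s) (hσ : (1 : ℝ) / 2 ≤ σ) (u v : H)
    (heq : (s • D + δ • ContinuousLinearMap.id ℝ H) (u - v)
        + (τ * α) • D (σ • u + (1 - σ) • v) = 0) :
    ‖u‖ ≤ ‖v‖ := by
  set d : H := u - v with hd
  set m : H := σ • u + (1 - σ) • v with hm
  have hsym : ∀ x y : H, (inner ℝ (D x) y : ℝ) = inner ℝ x (D y) := fun x y =>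
    hD.isSymmetric x y
  have hveq : s • D d + δ • d + (τ * α) • D m = 0 := by
    simpa [ContinuousLinearMap.add_apply, ContinuousLinearMap.smul_apply] using heq
  set a : ℝ := inner ℝ (D d) d with ha
  set b : ℝ := inner ℝ d d with hb
  set c : ℝ := inner ℝ (D m) m with hc
  set p : ℝ := inner ℝ (D d) m with hp
  set q : ℝ := (inner ℝ d m : ℝ) with hq
  have ha0 : 0 ≤ a := hDpos d
  have hb0 : 0 ≤ b := real_inner_self_nonneg
  have hc0 : 0 ≤ c := hDpos m
  have hK : 0 < τ * α := mul_pos hτ hα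
  -- pairing the equation with d
  have e1 : s * a + δ * b + (τ * α) * p = 0 := by
    have h := congrArg (fun x : H => (inner ℝ x d : ℝ)) hveq
    simp only [inner_add_left, real_inner_smul_left, inner_zero_left] at h
    have hmd : (inner ℝ (D m) d : ℝ) = p := by
      rw [hsym m d, real_inner_comm]
    rw [hmd] at h
    linarith [h]
  -- pairing the equation with m
  have e2 : s * p + δ * q + (τ * α) * c = 0 := by
    have h := congrArg (fun x : H => (inner ℝ x m : ℝ)) hveq
    simp only [inner_add_left, real_inner_smul_left, inner_zero_left] at h
    rw [← hq] at h
    linarith [h]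
  -- express inner ℝ d m
  have hdm : q = (‖u‖ ^ 2 - ‖v‖ ^ 2) / 2 + (σ - 1 / 2) * b := by
    have hbb : b = ‖u‖ ^ 2 - 2 * (inner ℝ u v : ℝ) + ‖v‖ ^ 2 := by
      rw [hb, hd]
      simp only [inner_sub_left, inner_sub_right]
      rw [real_inner_self_eq_norm_sq, real_inner_self_eq_norm_sq, real_inner_comm v u]
      ring
    rw [hq, hd, hm, hbb]
    simp only [inner_sub_left, inner_add_right, real_inner_smul_right]
    rw [real_inner_self_eq_norm_sq, real_inner_self_eq_norm_sq, real_inner_comm v u]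
    ring
  -- Cauchy-Schwarz for the semidefinite form
  have hCS : p ^ 2 ≤ a * c := by
    have key : ∀ t : ℝ, 0 ≤ c * (t * t) + (2 * p) * t + a := by
      intro t
      have h0 : (0 : ℝ) ≤ inner ℝ (D (d + t • m)) (d + t • m) := hDpos _
      have hexp : (inner ℝ (D (d + t • m)) (d + t • m) : ℝ)
          = c * (t * t) + (2 * p) * t + a := by
        simp only [map_add, map_smul, inner_add_left, inner_add_right,
          real_inner_smul_left, real_inner_smul_right]
        have hmd : (inner ℝ (D m) d : ℝ) = p := by
          rw [hsym m d, real_inner_comm]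
        rw [hmd]
        ring
      linarith [hexp ▸ h0]
    have hdis := discrim_le_zero key
    rw [discrim] at hdis
    nlinarith [hdis]
  clear_value a b c p q d m
  clear hveq hd hm ha hb hc hp hq heq hsym hDpos hD d m
  -- key estimate: s * (s*a + δ*b) ≤ (τα)^2 * c
  have hp' : (τ * α) * p = -(s * a + δ * b) := by linarith
  have hX2 : (s * a + δ * b) ^ 2 ≤ (τ * α) ^ 2 * (a * c) := by
    have h1 : (s * a + δ * b) ^ 2 = (τ * α) ^ 2 * p ^ 2 := by
      linear_combination (s * a + δ * b - τ * α * p) * hp'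
    rw [h1]
    exact mul_le_mul_of_nonneg_left hCS (sq_nonneg _)
  have hXnn : 0 ≤ s * a + δ * b := by
    have h1 := mul_nonneg hs ha0
    have h2 := mul_nonneg hδ.le hb0
    linarith
  have hkey : s * (s * a + δ * b) ≤ (τ * α) ^ 2 * c := by
    rcases eq_or_lt_of_le ha0 with h | h
    · -- a = 0
      subst h
      have hb' : δ * b = 0 := by nlinarith [hX2, sq_nonneg (δ * b)]
      rw [hb']
      have hz : s * (s * 0 + 0) = 0 := by ring
      rw [hz]
      positivity
    · -- a > 0
      have h1 : a * (s * (s * a + δ * b)) ≤ (s * a + δ * b) ^ 2 := by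
        nlinarith [mul_nonneg hδ.le hb0, mul_nonneg hs ha0, hXnn]
      have h2 : a * (s * (s * a + δ * b)) ≤ a * ((τ * α) ^ 2 * c) := by
        nlinarith [hX2]
      exact le_of_mul_le_mul_left h2 h
  -- conclude δ (‖u‖² - ‖v‖²) ≤ 0
  have hdm_eq : δ * q * (τ * α)
      = s * (s * a + δ * b) - (τ * α) ^ 2 * c := by
    linear_combination (τ * α) * e2 - s * e1
  have hdm_le : δ * q * (τ * α) ≤ 0 := by
    rw [hdm_eq]; linarith
  have hdm_le' : δ * q ≤ 0 := by
    by_contra hcon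
    push_neg at hcon
    have := mul_pos hcon hK
    linarith
  have hsq : ‖u‖ ^ 2 ≤ ‖v‖ ^ 2 := by
    have hσb : 0 ≤ (σ - 1 / 2) * b := mul_nonneg (by linarith) hb0
    have hfin : δ * ((‖u‖ ^ 2 - ‖v‖ ^ 2) / 2 + (σ - 1 / 2) * b) ≤ 0 := by
      rw [← hdm]; exact hdm_le'
    have h2 : (‖u‖ ^ 2 - ‖v‖ ^ 2) / 2 + (σ - 1 / 2) * b ≤ 0 := by
      by_contra hcon
      push_neg at hcon
      have := mul_pos hδ hcon
      linarith
    linarith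
  have h3 : 0 ≤ ‖v‖ := norm_nonneg v
  nlinarith [norm_nonneg u, hsq]
end

section
/- Let H be a real Hilbert space, let D : H →L[ℝ] H be a self-adjoint bounded linear operator with ⟪D x, x⟫ ≥ 0 for all x ∈ H, let δ > 0, 0 < α, σ ≥ 1/2 be real numbers, let N be a positive natural number, τ = 1/N, t_n = n·τ, and let ψ ∈ H. Suppose w : ℕ → H satisfies w_0 = δ^{−α}·ψ and, for all 0 ≤ n ≤ N−1, ((σ·t_{n+1} + (1−σ)·t_n)·D + δ·I)(w_{n+1} − w_n) + (τ·α)·D(σ·w_{n+1} + (1−σ)·w_n) = 0. Then ‖w_{n+1}‖ ≤ δ^{−α}·‖ψ‖ for all 0 ≤ n ≤ N−1. -/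
open RealInnerProductSpace

section Aux

variable {H : Type*} [NormedAddCommGroup H] [InnerProductSpace ℝ H] [CompleteSpace H]

/-- A coercive self-mapping is surjective (via Lax–Milgram). -/
lemma coercive_surjective (T : H →L[ℝ] H) (δ : ℝ) (hδ : 0 < δ)
    (hT : ∀ u : H, δ * ‖u‖ * ‖u‖ ≤ ⟪T u, u⟫) :
    Function.Surjective T := by
  set B : H →L[ℝ] H →L[ℝ] ℝ := (innerSL ℝ).comp T with hB
  have hcoer : IsCoercive B := ⟨δ, hδ, fun u => hT u⟩
  have hEq : ∀ v : H, hcoer.continuousLinearEquivOfBilin v = T v := by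
    intro v
    apply ext_inner_right ℝ
    intro w
    rw [hcoer.continuousLinearEquivOfBilin_apply]
    rfl
  intro y
  exact ⟨hcoer.continuousLinearEquivOfBilin.symm y, by
    rw [← hEq]; exact hcoer.continuousLinearEquivOfBilin.apply_symm_apply y⟩

lemma step_norm_le (D : H →L[ℝ] H) (hDpos : ∀ x : H, 0 ≤ ⟪D x, x⟫)
    (δ b c : ℝ) (hδ : 0 < δ) (h1 : 0 ≤ b - c) (h2 : 0 ≤ b + c)
    (x y : H) (hxy : b • D x + δ • x = c • D y + δ • y) :
    ‖x‖ ≤ ‖y‖ := by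
  have hb : 0 ≤ b := by linarith
  set T : H →L[ℝ] H := b • D + δ • ContinuousLinearMap.id ℝ H with hTdef
  set C : H →L[ℝ] H := c • D + δ • ContinuousLinearMap.id ℝ H with hCdef
  have hTapp : ∀ u : H, T u = b • D u + δ • u := fun u => rfl
  have hCapp : ∀ u : H, C u = c • D u + δ • u := fun u => rfl
  have hcoer : ∀ u : H, δ * ‖u‖ * ‖u‖ ≤ ⟪T u, u⟫ := by
    intro u
    rw [hTapp, inner_add_left, real_inner_smul_left, real_inner_smul_left,
      real_inner_self_eq_norm_mul_norm]
    nlinarith [hDpos u]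
  obtain ⟨z, hz⟩ := coercive_surjective T δ hδ hcoer y
  have hcomm : T (C z) = C (T z) := by
    rw [hTapp, hCapp, hCapp, hTapp, map_add, map_smul, map_smul, map_add, map_smul, map_smul]
    module
  have hTx : T x = T (C z) := by
    rw [hTapp, hxy, hcomm, hCapp, hz]
  have hx : x = C z := by
    have h0 : T (x - C z) = 0 := by rw [map_sub, hTx, sub_self]
    have h1' := hcoer (x - C z)
    rw [h0, inner_zero_left] at h1'
    have hn : ‖x - C z‖ = 0 := by
      by_contra h
      have hpos : 0 < ‖x - C z‖ := lt_of_le_of_ne (norm_nonneg _) (Ne.symm h)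
      nlinarith [mul_pos (mul_pos hδ hpos) hpos]
    exact sub_eq_zero.mp (norm_eq_zero.mp hn)
  rw [hx, ← hz]
  have expand : ∀ a : ℝ, ⟪a • D z + δ • z, a • D z + δ • z⟫ =
      a * a * ⟪D z, D z⟫ + 2 * a * δ * ⟪D z, z⟫ + δ * δ * ⟪z, z⟫ := by
    intro a
    simp only [inner_add_left, inner_add_right, real_inner_smul_left, real_inner_smul_right,
      real_inner_comm z (D z)]
    ring
  have key : ‖C z‖ * ‖C z‖ ≤ ‖T z‖ * ‖T z‖ := by
    rw [← real_inner_self_eq_norm_mul_norm, ← real_inner_self_eq_norm_mul_norm,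
      hCapp, hTapp, expand, expand]
    nlinarith [mul_nonneg (mul_nonneg h1 h2) (real_inner_self_nonneg : (0:ℝ) ≤ ⟪D z, D z⟫),
      mul_nonneg (mul_nonneg h1 hδ.le) (hDpos z)]
  nlinarith [norm_nonneg (T z), norm_nonneg (C z)]

end Aux

/-- Theorem 1 of the paper: unconditional stability of the implicit two-level
weighted scheme for the pseudo-parabolic Cauchy problem, for `σ ≥ 1/2`. -/
theorem two_level_scheme_unconditional_stability
    {H : Type*} [NormedAddCommGroup H] [InnerProductSpace ℝ H] [CompleteSpace H]
    (D : H →L[ℝ] H) (hD : IsSelfAdjoint D)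
    (hDpos : ∀ x : H, 0 ≤ (inner ℝ (D x) x : ℝ))
    (δ α σ : ℝ) (hδ : 0 < δ) (hα : 0 < α) (hσ : (1 : ℝ) / 2 ≤ σ)
    (N : ℕ) (hN : 0 < N) (τ : ℝ) (hτ : τ = 1 / (N : ℝ))
    (t : ℕ → ℝ) (ht : ∀ n : ℕ, t n = (n : ℝ) * τ)
    (ψ : H) (w : ℕ → H)
    (hw0 : w 0 = (δ ^ (-α) : ℝ) • ψ)
    (hscheme : ∀ n : ℕ, n ≤ N - 1 →
      ((σ * t (n + 1) + (1 - σ) * t n) • D + δ • ContinuousLinearMap.id ℝ H)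
          (w (n + 1) - w n)
        + (τ * α) • D (σ • w (n + 1) + (1 - σ) • w n) = 0) :
    ∀ n : ℕ, n ≤ N - 1 → ‖w (n + 1)‖ ≤ (δ ^ (-α) : ℝ) * ‖ψ‖ := by
  have hτpos : 0 < τ := by
    rw [hτ]
    positivity
  -- one-step estimate
  have hstep : ∀ n : ℕ, n ≤ N - 1 → ‖w (n + 1)‖ ≤ ‖w n‖ := by
    intro n hn
    have hsch := hscheme n hn
    set s : ℝ := σ * t (n + 1) + (1 - σ) * t n with hs
    have hsval : s = ((n : ℝ) + σ) * τ := by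
      rw [hs, ht, ht]
      push_cast
      ring
    have hsnn : 0 ≤ s := by
      rw [hsval]
      have : (0:ℝ) ≤ (n : ℝ) := Nat.cast_nonneg n
      nlinarith
    apply step_norm_le D hDpos δ (s + τ * α * σ) (s - τ * α * (1 - σ)) hδ
    · have : s + τ * α * σ - (s - τ * α * (1 - σ)) = τ * α := by ring
      rw [this]
      positivity
    · have : s + τ * α * σ + (s - τ * α * (1 - σ)) = 2 * s + τ * α * (2 * σ - 1) := by ring
      rw [this]
      nlinarith [hsnn, mul_nonneg (le_of_lt (mul_pos hτpos hα)) (by linarith : (0:ℝ) ≤ 2 * σ - 1)]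
    · have hexp : s • (D (w (n + 1)) - D (w n)) + δ • (w (n + 1) - w n)
          + (τ * α) • (σ • D (w (n + 1)) + (1 - σ) • D (w n)) = 0 := by
        have e1 : D (w (n + 1) - w n) = D (w (n + 1)) - D (w n) := map_sub D _ _
        have e2 : D (σ • w (n + 1) + (1 - σ) • w n)
            = σ • D (w (n + 1)) + (1 - σ) • D (w n) := by
          rw [map_add, map_smul, map_smul]
        simpa [ContinuousLinearMap.add_apply, ContinuousLinearMap.smul_apply,
          ContinuousLinearMap.id_apply, e1, e2, smul_sub] using hsch
      have := hexp
      -- rearrange to the required form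
      linear_combination (norm := module) hexp
  -- iterate
  have hiter : ∀ n : ℕ, n ≤ N - 1 → ‖w (n + 1)‖ ≤ ‖w 0‖ := by
    intro n
    induction n with
    | zero => intro hn; exact hstep 0 hn
    | succ m ih =>
      intro hn
      have hm : m ≤ N - 1 := le_trans (Nat.le_succ m) hn
      exact le_trans (hstep (m + 1) hn) (ih hm)
  intro n hn
  have h0 : ‖w 0‖ = (δ ^ (-α) : ℝ) * ‖ψ‖ := by
    rw [hw0, norm_smul, Real.norm_eq_abs,
      abs_of_pos (Real.rpow_pos_of_pos hδ (-α))]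
  rw [← h0]
  exact hiter n hn
end

section
/- Let H be a real Hilbert space, let D : H →L[ℝ] H be a self-adjoint bounded linear operator with ⟪D x, x⟫ ≥ 0 for all x ∈ H, let δ > 0, α > 0, σ > 1/4 be real numbers, let N ≥ 2 be a natural number, τ = 1/N, t_n = n·τ. Suppose w : ℕ → H satisfies, for all 1 ≤ n ≤ N−1, α⁻¹·(t_n·D + δ·I)((w_{n+1} − w_{n−1})/(2τ)) + D(σ·w_{n+1} + (1−2σ)·w_n + σ·w_{n−1}) = 0. Define the energy E_n = (1/4)·⟪D(w_n + w_{n−1}), w_n + w_{n−1}⟫ + (σ − 1/4)·⟪D(w_n − w_{n−1}), w_n − w_{n−1}⟫. Then E_{n+1} ≤ E_n for all 1 ≤ n ≤ N−1. -/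
/-- Theorem 2 of the paper: unconditional stability of the three-level
symmetric weighted scheme for `σ > 1/4`: the energies `E n` are nonincreasing. -/
theorem three_level_scheme_energy_decay
    {H : Type*} [NormedAddCommGroup H] [InnerProductSpace ℝ H] [CompleteSpace H]
    (D : H →L[ℝ] H) (hD : IsSelfAdjoint D)
    (hDpos : ∀ x : H, 0 ≤ (inner ℝ (D x) x : ℝ))
    (δ α σ : ℝ) (hδ : 0 < δ) (hα : 0 < α) (hσ : (1 : ℝ) / 4 < σ)
    (N : ℕ) (hN : 2 ≤ N) (τ : ℝ) (hτ : τ = 1 / (N : ℝ))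
    (t : ℕ → ℝ) (ht : ∀ n : ℕ, t n = (n : ℝ) * τ)
    (w : ℕ → H)
    (hscheme : ∀ n : ℕ, 1 ≤ n → n ≤ N - 1 →
      α⁻¹ • ((t n • D + δ • ContinuousLinearMap.id ℝ H)
          ((2 * τ)⁻¹ • (w (n + 1) - w (n - 1))))
        + D (σ • w (n + 1) + (1 - 2 * σ) • w n + σ • w (n - 1)) = 0)
    (E : ℕ → ℝ)
    (hE : ∀ n : ℕ, E n =
      (1 / 4) * (inner ℝ (D (w n + w (n - 1))) (w n + w (n - 1)) : ℝ)
        + (σ - 1 / 4) * (inner ℝ (D (w n - w (n - 1))) (w n - w (n - 1)) : ℝ)) :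
    ∀ n : ℕ, 1 ≤ n → n ≤ N - 1 → E (n + 1) ≤ E n := by
  intro n hn1 hn2
  have hsym : ∀ x y : H, (inner ℝ (D x) y : ℝ) = inner ℝ (D y) x := by
    intro x y
    have h := hD.isSymmetric x y
    simp only [ContinuousLinearMap.coe_coe] at h
    rw [h, real_inner_comm]
  have hNpos : (0 : ℝ) < (N : ℝ) := by exact_mod_cast (by omega : 0 < N)
  have hτpos : 0 < τ := by rw [hτ]; positivity
  set u := w (n + 1) with hu
  set v := w n with hv
  set z := w (n - 1) with hz
  have hsch := hscheme n hn1 hn2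
  have hDeq : D (σ • u + (1 - 2 * σ) • v + σ • z)
      = -(α⁻¹ • ((t n • D + δ • ContinuousLinearMap.id ℝ H)
          ((2 * τ)⁻¹ • (u - z)))) := eq_neg_of_add_eq_zero_right hsch
  set key : ℝ := inner ℝ (D (σ • u + (1 - 2 * σ) • v + σ • z)) (u - z) with hkey
  have hkeyle : key ≤ 0 := by
    have : key = -(α⁻¹ * ((2 * τ)⁻¹ * (t n * inner ℝ (D (u - z)) (u - z)
        + δ * inner ℝ (u - z) (u - z)))) := by
      rw [hkey, hDeq]
      simp only [ContinuousLinearMap.add_apply, ContinuousLinearMap.smul_apply,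
        ContinuousLinearMap.id_apply, map_smul, inner_neg_left, smul_smul,
        real_inner_smul_left, smul_add, inner_add_left]
      ring
    rw [this]
    have h1 : (0:ℝ) ≤ t n := by
      rw [ht]; positivity
    have h2 : (0:ℝ) ≤ inner ℝ (D (u - z)) (u - z) := hDpos _
    have h3 : (0:ℝ) ≤ (inner ℝ (u - z) (u - z) : ℝ) := real_inner_self_nonneg
    have h4 : (0:ℝ) ≤ α⁻¹ := by positivity
    have h5 : (0:ℝ) ≤ (2 * τ)⁻¹ := by positivity
    have := mul_nonneg h4 (mul_nonneg h5 (add_nonneg (mul_nonneg h1 h2)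
      (mul_nonneg hδ.le h3)))
    linarith
  have hexp : E (n + 1) - E n = key := by
    rw [hE (n + 1), hE n]
    simp only [Nat.add_sub_cancel, ← hu, ← hv, ← hz, hkey]
    simp only [map_add, map_sub, map_smul, inner_add_left, inner_add_right,
      inner_sub_left, inner_sub_right, real_inner_smul_left, real_inner_smul_right]
    rw [hsym z u, hsym z v, hsym v u]
    ring
  linarith
end

section
/- Let H be a real Hilbert space, let D : H →L[ℝ] H be a self-adjoint bounded linear operator with ⟪D x, x⟫ ≥ 0 for all x ∈ H, let δ > 0 and 0 < α < 4 be real numbers, and set σ₀ = (2 + α)/(6α). Let N ≥ 2 be a natural number, τ = 1/N, t_n = n·τ, and suppose w : ℕ → H satisfies, for all 1 ≤ n ≤ N−1, α⁻¹·(t_n·D + δ·I)((w_{n+1} − w_{n−1})/(2τ)) + D(σ₀·w_{n+1} + (1−2σ₀)·w_n + σ₀·w_{n−1}) = 0. Then σ₀ > 1/4, and the energies E_n = (1/4)·⟪D(w_n + w_{n−1}), w_n + w_{n−1}⟫ + (σ₀ − 1/4)·⟪D(w_n − w_{n−1}), w_n − w_{n−1}⟫ satisfy E_{n+1} ≤ E_n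 for all 1 ≤ n ≤ N−1. -/
/-- Theorem 3 of the paper: the fourth-order three-level scheme with the optimal
weight `σ₀ = (2 + α)/(6α)` is unconditionally stable for `0 < α < 4`. -/
theorem fourth_order_three_level_scheme_stability
    {H : Type*} [NormedAddCommGroup H] [InnerProductSpace ℝ H] [CompleteSpace H]
    (D : H →L[ℝ] H) (hD : IsSelfAdjoint D)
    (hDpos : ∀ x : H, 0 ≤ (inner ℝ (D x) x : ℝ))
    (δ α : ℝ) (hδ : 0 < δ) (hα : 0 < α) (hα4 : α < 4)
    (σ₀ : ℝ) (hσ₀ : σ₀ = (2 + α) / (6 * α))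
    (N : ℕ) (hN : 2 ≤ N) (τ : ℝ) (hτ : τ = 1 / (N : ℝ))
    (t : ℕ → ℝ) (ht : ∀ n : ℕ, t n = (n : ℝ) * τ)
    (w : ℕ → H)
    (hscheme : ∀ n : ℕ, 1 ≤ n → n ≤ N - 1 →
      α⁻¹ • ((t n • D + δ • ContinuousLinearMap.id ℝ H)
          ((2 * τ)⁻¹ • (w (n + 1) - w (n - 1))))
        + D (σ₀ • w (n + 1) + (1 - 2 * σ₀) • w n + σ₀ • w (n - 1)) = 0)
    (E : ℕ → ℝ)
    (hE : ∀ n : ℕ, E n =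
      (1 / 4) * (inner ℝ (D (w n + w (n - 1))) (w n + w (n - 1)) : ℝ)
        + (σ₀ - 1 / 4) * (inner ℝ (D (w n - w (n - 1))) (w n - w (n - 1)) : ℝ)) :
    (1 : ℝ) / 4 < σ₀ ∧ ∀ n : ℕ, 1 ≤ n → n ≤ N - 1 → E (n + 1) ≤ E n := by
  have hσ : (1:ℝ)/4 < σ₀ := by
    rw [hσ₀, lt_div_iff₀ (by positivity)]; nlinarith
  refine ⟨hσ, ?_⟩
  intro n hn hnN
  have hNpos : (0:ℝ) < N := by exact_mod_cast Nat.lt_of_lt_of_le (by norm_num) hN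
  have hτpos : 0 < τ := by rw [hτ]; positivity
  have htn : 0 ≤ t n := by rw [ht]; positivity
  have hsym : ∀ x y : H, (inner ℝ (D x) y : ℝ) = inner ℝ (D y) x := by
    intro x y
    have h1 : (inner ℝ (D x) y : ℝ) = inner ℝ x (D y) := hD.isSymmetric x y
    rw [h1, real_inner_comm]
  have heq := hscheme n hn hnN
  set a := w (n+1) with ha
  set b := w n with hb
  set c := w (n-1) with hc
  have h0 : α⁻¹ * ((2*τ)⁻¹ * (t n * (inner ℝ (D (a-c)) (a-c) : ℝ) + δ * (inner ℝ (a-c) (a-c) : ℝ)))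
      + (inner ℝ (D (σ₀ • a + (1 - 2*σ₀) • b + σ₀ • c)) (a - c) : ℝ) = 0 := by
    have h := congrArg (fun z : H => (inner ℝ z (a - c) : ℝ)) heq
    simp only [inner_add_left, inner_zero_left, real_inner_smul_left,
      ContinuousLinearMap.add_apply, ContinuousLinearMap.coe_smul', Pi.smul_apply,
      ContinuousLinearMap.coe_id', id_eq, map_smul, map_add, map_sub] at h
    simp only [map_add, map_sub, map_smul, inner_add_left, inner_add_right,
      inner_sub_left, inner_sub_right, real_inner_smul_left, real_inner_smul_right] at h ⊢
    linear_combination h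
  have hfirst : 0 ≤ α⁻¹ * ((2*τ)⁻¹ * (t n * (inner ℝ (D (a-c)) (a-c) : ℝ) + δ * (inner ℝ (a-c) (a-c) : ℝ))) := by
    have h1 := hDpos (a - c)
    have h2 : (0:ℝ) ≤ inner ℝ (a-c) (a-c) := real_inner_self_nonneg
    positivity
  have hS : E (n+1) - E n = (inner ℝ (D (σ₀ • a + (1 - 2*σ₀) • b + σ₀ • c)) (a - c) : ℝ) := by
    rw [hE (n+1), hE n]
    simp only [Nat.add_sub_cancel, ← ha, ← hb, ← hc]
    simp only [map_add, map_sub, map_smul, inner_add_left, inner_add_right,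
      inner_sub_left, inner_sub_right, real_inner_smul_left, real_inner_smul_right]
    rw [hsym b a, hsym c a, hsym c b]
    ring
  linarith
end

section
/- Let H be a real Hilbert space, let D : H →L[ℝ] H be a self-adjoint bounded linear operator with ⟪D x, x⟫ ≥ 0 for all x ∈ H, and let δ > 0, α > 0 be real numbers. Suppose w : ℝ → H is differentiable on [0,1] and satisfies, for all t ∈ [0,1], α⁻¹·(t·D + δ·I)(w'(t)) + D(w(t)) = 0. Then ‖w(t)‖ ≤ ‖w(0)‖ for all t ∈ [0,1]. -/
/-- Cauchy–Schwarz for a nonnegative self-adjoint operator. -/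
lemma cs_selfadjoint {H : Type*} [NormedAddCommGroup H] [InnerProductSpace ℝ H]
    [CompleteSpace H] (D : H →L[ℝ] H) (hD : IsSelfAdjoint D)
    (hDpos : ∀ x : H, 0 ≤ (inner ℝ (D x) x : ℝ)) (x y : H) :
    (inner ℝ (D x) y : ℝ) ^ 2 ≤ inner ℝ (D x) x * inner ℝ (D y) y := by
  have hsym : ∀ a b : H, (inner ℝ (D a) b : ℝ) = inner ℝ (D b) a := fun a b =>
    (hD.isSymmetric a b).trans (real_inner_comm _ _)
  have key : ∀ l : ℝ, 0 ≤ (inner ℝ (D y) y : ℝ) * (l * l) +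
      (2 * inner ℝ (D x) y) * l + inner ℝ (D x) x := by
    intro l
    have h := hDpos (x + l • y)
    have e : (inner ℝ (D (x + l • y)) (x + l • y) : ℝ)
        = (inner ℝ (D y) y : ℝ) * (l * l) + (2 * inner ℝ (D x) y) * l + inner ℝ (D x) x := by
      simp only [map_add, map_smul, inner_add_left, inner_add_right,
        real_inner_smul_left, real_inner_smul_right]
      rw [hsym y x]
      ring
    rw [e] at h
    exact h
  have hd := discrim_le_zero key
  rw [discrim] at hd
  nlinarith [hd]

/-- A priori estimate for the pseudo-parabolic Cauchy problem
`(1/α)(tD + δI) w' + D w = 0` on `[0,1]`: the norm of the solution does not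
exceed the norm of the initial data. -/
theorem cauchy_problem_a_priori_estimate
    {H : Type*} [NormedAddCommGroup H] [InnerProductSpace ℝ H] [CompleteSpace H]
    (D : H →L[ℝ] H) (hD : IsSelfAdjoint D)
    (hDpos : ∀ x : H, 0 ≤ (inner ℝ (D x) x : ℝ))
    (δ α : ℝ) (hδ : 0 < δ) (hα : 0 < α)
    (w w' : ℝ → H)
    (hderiv : ∀ t ∈ Set.Icc (0 : ℝ) 1, HasDerivAt w (w' t) t)
    (heq : ∀ t ∈ Set.Icc (0 : ℝ) 1,
      α⁻¹ • ((t • D + δ • ContinuousLinearMap.id ℝ H) (w' t)) + D (w t) = 0) :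
    ∀ t ∈ Set.Icc (0 : ℝ) 1, ‖w t‖ ≤ ‖w 0‖ := by
  have hsym : ∀ a b : H, (inner ℝ (D a) b : ℝ) = inner ℝ (D b) a := fun a b =>
    (hD.isSymmetric a b).trans (real_inner_comm _ _)
  -- pointwise: ⟪w' t, w t⟫ ≤ 0
  have hkey : ∀ t ∈ Set.Icc (0 : ℝ) 1, (inner ℝ (w' t) (w t) : ℝ) ≤ 0 := by
    intro t ht
    set u := w' t with hu
    set v := w t with hv
    have heqt := heq t ht
    have heq2 : t • D u + δ • u + α • D v = 0 := by
      have h := congrArg (fun z => α • z) heqt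
      simpa [smul_add, smul_smul, mul_inv_cancel_left₀ hα.ne',
        mul_inv_cancel₀ hα.ne', ContinuousLinearMap.add_apply,
        ContinuousLinearMap.smul_apply] using h
    have h1 : t * inner ℝ (D u) u + δ * inner ℝ u u + α * inner ℝ (D u) v = (0:ℝ) := by
      have h := congrArg (fun z => (inner ℝ z u : ℝ)) heq2
      simpa [inner_add_left, real_inner_smul_left, hsym v u] using h
    have h2 : t * inner ℝ (D u) v + δ * inner ℝ u v + α * inner ℝ (D v) v = (0:ℝ) := by
      have h := congrArg (fun z => (inner ℝ z v : ℝ)) heq2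
      simpa [inner_add_left, real_inner_smul_left] using h
    have hcs := cs_selfadjoint D hD hDpos u v
    have ha := hDpos u
    have hc := hDpos v
    have hn : (0:ℝ) ≤ inner ℝ u u := real_inner_self_nonneg
    have ht0 : (0:ℝ) ≤ t := ht.1
    set a : ℝ := inner ℝ (D u) u
    set b : ℝ := inner ℝ (D u) v
    set c : ℝ := inner ℝ (D v) v
    set n : ℝ := inner ℝ u u
    rcases eq_or_lt_of_le ha with haz | hap
    · have hb0 : b = 0 := by nlinarith
      have hn0 : n = 0 := by nlinarith
      nlinarith
    · have hb : α * b = -(t * a + δ * n) := by linarith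
      have hbsq : (t * a + δ * n) ^ 2 = α ^ 2 * b ^ 2 := by linear_combination (t * a + δ * n - α * b) * hb
      have h3 : (t * a + δ * n) ^ 2 ≤ α ^ 2 * (a * c) := by
        have := mul_le_mul_of_nonneg_left hcs (sq_nonneg α)
        linarith
      have hid : α * (a * (t * b + α * c)) =
          α ^ 2 * (a * c) - (t * a + δ * n) ^ 2 + δ * n * (t * a + δ * n) := by
        linear_combination (t * a) * hb
      have hnn : (0:ℝ) ≤ δ * n * (t * a + δ * n) :=
        mul_nonneg (mul_nonneg hδ.le hn)
          (add_nonneg (mul_nonneg ht0 ha) (mul_nonneg hδ.le hn))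
      have h4 : 0 ≤ α * (a * (t * b + α * c)) := by linarith
      have h5 : 0 ≤ t * b + α * c := by
        by_contra hcon
        push_neg at hcon
        have := mul_pos (mul_pos hα hap) (neg_pos.2 hcon)
        nlinarith
      by_contra hcon2
      push_neg at hcon2
      have := mul_pos hδ hcon2
      linarith
  set f : ℝ → ℝ := fun t => (inner ℝ (w t) (w t) : ℝ) with hf
  have hfd : ∀ t ∈ Set.Icc (0:ℝ) 1, HasDerivAt f (2 * inner ℝ (w' t) (w t)) t := by
    intro t ht
    have h := (hderiv t ht).inner ℝ (hderiv t ht)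
    simpa [hf, real_inner_comm (w t) (w' t), two_mul] using h
  have hanti : AntitoneOn f (Set.Icc 0 1) := by
    apply antitoneOn_of_deriv_nonpos (convex_Icc 0 1)
    · exact fun t ht => ((hfd t ht).continuousAt).continuousWithinAt
    · intro t ht
      rw [interior_Icc] at ht
      exact ((hfd t ⟨ht.1.le, ht.2.le⟩).differentiableAt).differentiableWithinAt
    · intro t ht
      rw [interior_Icc] at ht
      have ht' : t ∈ Set.Icc (0:ℝ) 1 := ⟨ht.1.le, ht.2.le⟩
      rw [(hfd t ht').deriv]
      have h := hkey t ht'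
      linarith
  intro t ht
  have h0 : (0:ℝ) ∈ Set.Icc (0:ℝ) 1 := by norm_num
  have hft : f t ≤ f 0 := hanti h0 ht ht.1
  have hsq : ‖w t‖ ^ 2 ≤ ‖w 0‖ ^ 2 := by
    rw [← real_inner_self_eq_norm_sq, ← real_inner_self_eq_norm_sq]
    exact hft
  exact (pow_le_pow_iff_left₀ (norm_nonneg _) (norm_nonneg _) two_ne_zero).1 hsq
end

section
/- Let H be a real Hilbert space, let D : H →L[ℝ] H be a self-adjoint bounded linear operator with ⟪D x, x⟫ ≥ 0 for all x ∈ H, and let δ > 0, α > 0, τ > 0 be real numbers with τ·‖D‖ ≤ 2δ/(1 + α). Then for every x ∈ H, ⟪((α·τ/δ)·D − (α·(1+α)·τ²/(2δ²))·D²) x, x⟫ ≥ 0; that is, R ≤ I where R = I − (α·τ/δ)·D + (α·(1+α)·τ²/(2δ²))·D². -/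
/-- Cauchy–Schwarz for the positive symmetric form `⟪D x, y⟫`. -/
lemma pos_form_cauchy_schwarz
    {H : Type*} [NormedAddCommGroup H] [InnerProductSpace ℝ H] [CompleteSpace H]
    (D : H →L[ℝ] H) (hD : IsSelfAdjoint D)
    (hDpos : ∀ x : H, 0 ≤ (inner ℝ (D x) x : ℝ)) (x y : H) :
    (inner ℝ (D x) y : ℝ) ^ 2 ≤ (inner ℝ (D x) x : ℝ) * (inner ℝ (D y) y : ℝ) := by
  have hsym : ∀ u v : H, (inner ℝ (D u) v : ℝ) = (inner ℝ (D v) u : ℝ) := fun u v =>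
    (hD.isSymmetric u v).trans (real_inner_comm _ _)
  have key : ∀ t : ℝ, 0 ≤ (inner ℝ (D x) x : ℝ) * (t * t)
      + (2 * (inner ℝ (D x) y : ℝ)) * t + (inner ℝ (D y) y : ℝ) := by
    intro t
    have h0 := hDpos (t • x + y)
    have e : (inner ℝ (D (t • x + y)) (t • x + y) : ℝ)
        = (inner ℝ (D x) x : ℝ) * (t * t) + (2 * (inner ℝ (D x) y : ℝ)) * t
          + (inner ℝ (D y) y : ℝ) := by
      simp only [map_add, map_smul, inner_add_left, inner_add_right,
        real_inner_smul_left, real_inner_smul_right]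
      linear_combination t * hsym y x
    linarith [e ▸ h0]
  have hd := discrim_le_zero key
  rw [discrim] at hd
  nlinarith [hd]

/-- The 'right inequality' `R ≤ I` for the transition operator
`R = I − (α/δ)τD + (α(1+α)/(2δ²))τ²D²` of the second-order explicit scheme,
under the time-step restriction `τ‖D‖ ≤ 2δ/(1+α)`. -/
theorem explicit_scheme_right_inequality
    {H : Type*} [NormedAddCommGroup H] [InnerProductSpace ℝ H] [CompleteSpace H]
    (D : H →L[ℝ] H) (hD : IsSelfAdjoint D)
    (hDpos : ∀ x : H, 0 ≤ (inner ℝ (D x) x : ℝ))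
    (δ α τ : ℝ) (hδ : 0 < δ) (hα : 0 < α) (hτ : 0 < τ)
    (hstep : τ * ‖D‖ ≤ 2 * δ / (1 + α)) :
    ∀ x : H,
      0 ≤ (inner ℝ (((α * τ / δ) • D
        - (α * (1 + α) * τ ^ 2 / (2 * δ ^ 2)) • (D ∘L D)) x) x : ℝ) := by
  intro x
  -- key: ‖D x‖² ≤ ‖D‖ * ⟪D x, x⟫
  have hkey : ‖D x‖ ^ 2 ≤ ‖D‖ * (inner ℝ (D x) x : ℝ) := by
    by_cases hzero : D x = 0
    · simp [hzero]
    · have hcs := pos_form_cauchy_schwarz D hD hDpos x (D x)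
      have h1 : (inner ℝ (D x) (D x) : ℝ) = ‖D x‖ ^ 2 := real_inner_self_eq_norm_sq _
      have h2 : (inner ℝ (D (D x)) (D x) : ℝ) ≤ ‖D‖ * ‖D x‖ ^ 2 := by
        calc (inner ℝ (D (D x)) (D x) : ℝ) ≤ ‖D (D x)‖ * ‖D x‖ := real_inner_le_norm _ _
          _ ≤ (‖D‖ * ‖D x‖) * ‖D x‖ := by
              exact mul_le_mul_of_nonneg_right (D.le_opNorm _) (norm_nonneg _)
          _ = ‖D‖ * ‖D x‖ ^ 2 := by ring
      have hn : (0 : ℝ) < ‖D x‖ ^ 2 := by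
        have : 0 < ‖D x‖ := norm_pos_iff.mpr hzero
        positivity
      have hp := hDpos x
      nlinarith [hcs, hn, hp, mul_le_mul_of_nonneg_left h2 hp]
  have hDD : (inner ℝ ((D ∘L D) x) x : ℝ) = ‖D x‖ ^ 2 := by
    calc (inner ℝ ((D ∘L D) x) x : ℝ) = (inner ℝ (D (D x)) x : ℝ) := rfl
      _ = (inner ℝ (D x) (D x) : ℝ) := hD.isSymmetric (D x) x
      _ = ‖D x‖ ^ 2 := real_inner_self_eq_norm_sq _
  have hval : (inner ℝ (((α * τ / δ) • D
      - (α * (1 + α) * τ ^ 2 / (2 * δ ^ 2)) • (D ∘L D)) x) x : ℝ)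
      = (α * τ / δ) * (inner ℝ (D x) x : ℝ)
        - (α * (1 + α) * τ ^ 2 / (2 * δ ^ 2)) * ‖D x‖ ^ 2 := by
    rw [ContinuousLinearMap.sub_apply, inner_sub_left,
      ContinuousLinearMap.smul_apply, ContinuousLinearMap.smul_apply,
      real_inner_smul_left, real_inner_smul_left, hDD]
  rw [hval]
  -- coefficient comparison
  have hcoef : (α * (1 + α) * τ ^ 2 / (2 * δ ^ 2)) * ‖D‖ ≤ α * τ / δ := by
    have h1α : (0 : ℝ) < 1 + α := by linarith
    have h2 : (1 + α) * (τ * ‖D‖) ≤ 2 * δ := by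
      have := mul_le_mul_of_nonneg_left hstep h1α.le
      rw [mul_div_cancel₀ _ (ne_of_gt h1α)] at this
      linarith
    rw [div_mul_eq_mul_div, div_le_div_iff₀ (by positivity) hδ]
    nlinarith [mul_le_mul_of_nonneg_left h2 (by positivity : (0:ℝ) ≤ α * τ * δ)]
  have hp := hDpos x
  calc (0:ℝ) ≤ ((α * τ / δ) - (α * (1 + α) * τ ^ 2 / (2 * δ ^ 2)) * ‖D‖)
        * (inner ℝ (D x) x : ℝ) := mul_nonneg (by linarith) hp
    _ ≤ (α * τ / δ) * (inner ℝ (D x) x : ℝ)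
        - (α * (1 + α) * τ ^ 2 / (2 * δ ^ 2)) * ‖D x‖ ^ 2 := by
        have := mul_le_mul_of_nonneg_left hkey
          (by positivity : (0:ℝ) ≤ α * (1 + α) * τ ^ 2 / (2 * δ ^ 2))
        nlinarith [this]
end

section
/- Let H be a real Hilbert space, let D : H →L[ℝ] H be a self-adjoint bounded linear operator with ⟪D x, x⟫ ≥ 0 for all x ∈ H, and let δ > 0, α > 0, τ > 0 be real numbers with τ·‖D‖ ≤ 2δ/(1 + α). Define R = I − (α·τ/δ)·D + (α·(1+α)·τ²/(2δ²))·D². Then ‖R x‖ ≤ ‖x‖ for all x ∈ H. -/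
open scoped RealInnerProductSpace

/-- A symmetric operator whose quadratic form is bounded by the norm squared
is a contraction (via polarization). -/
lemma sym_quadform_contraction
    {H : Type*} [NormedAddCommGroup H] [InnerProductSpace ℝ H]
    (A : H →L[ℝ] H)
    (hsym : ∀ x y : H, ⟪A x, y⟫ = ⟪A y, x⟫)
    (hbound : ∀ x : H, |⟪A x, x⟫| ≤ ‖x‖ ^ 2) :
    ∀ x : H, ‖A x‖ ≤ ‖x‖ := by
  intro x
  rcases eq_or_ne (A x) 0 with h0 | h0
  · simp [h0]
  rcases eq_or_ne x 0 with hx0 | hx0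
  · exact absurd (by simp [hx0]) h0
  have hAx : 0 < ‖A x‖ := norm_pos_iff.mpr h0
  have hxn : 0 < ‖x‖ := norm_pos_iff.mpr hx0
  set y := (‖x‖ / ‖A x‖) • A x with hy
  have hny : ‖y‖ = ‖x‖ := by
    rw [hy, norm_smul, Real.norm_eq_abs, abs_div, abs_of_nonneg (norm_nonneg x),
      abs_of_nonneg (norm_nonneg (A x))]
    field_simp
  have hip : ⟪A x, y⟫ = ‖x‖ * ‖A x‖ := by
    rw [hy, real_inner_smul_right, real_inner_self_eq_norm_sq]
    field_simp
  have key : 4 * ⟪A x, y⟫ = ⟪A (x + y), x + y⟫ - ⟪A (x - y), x - y⟫ := by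
    have h1 := hsym x y
    simp only [map_add, map_sub, inner_add_left, inner_add_right, inner_sub_left,
      inner_sub_right]
    linarith
  have hb1 := abs_le.mp (hbound (x + y))
  have hb2 := abs_le.mp (hbound (x - y))
  have hpar := parallelogram_law_with_norm ℝ x y
  have h4 : 4 * (‖x‖ * ‖A x‖) ≤ 4 * ‖x‖ ^ 2 := by
    rw [← hip]
    nlinarith [hb1.2, hb2.1, hpar, key, hny, sq_nonneg (‖x‖)]
  have := (mul_le_mul_iff_right₀ (by positivity : (0:ℝ) < 4 * ‖x‖)).mp
    (by nlinarith : 4 * ‖x‖ * ‖A x‖ ≤ 4 * ‖x‖ * ‖x‖)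
  exact this

/-- Stability of the second-order explicit scheme: the transition operator
`R = I − (α/δ)τD + (α(1+α)/(2δ²))τ²D²` is a contraction under the time-step
restriction `τ‖D‖ ≤ 2δ/(1+α)`. -/
theorem explicit_scheme_contraction
    {H : Type*} [NormedAddCommGroup H] [InnerProductSpace ℝ H] [CompleteSpace H]
    (D : H →L[ℝ] H) (hD : IsSelfAdjoint D)
    (hDpos : ∀ x : H, 0 ≤ (inner ℝ (D x) x : ℝ))
    (δ α τ : ℝ) (hδ : 0 < δ) (hα : 0 < α) (hτ : 0 < τ)
    (hstep : τ * ‖D‖ ≤ 2 * δ / (1 + α))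
    (R : H →L[ℝ] H)
    (hR : R = ContinuousLinearMap.id ℝ H - (α * τ / δ) • D
        + (α * (1 + α) * τ ^ 2 / (2 * δ ^ 2)) • (D ∘L D)) :
    ∀ x : H, ‖R x‖ ≤ ‖x‖ := by
  have hSym : ∀ x y : H, ⟪D x, y⟫ = ⟪x, D y⟫ :=
    fun x y => (ContinuousLinearMap.isSelfAdjoint_iff_isSymmetric.mp hD) x y
  have hDn : (0:ℝ) ≤ ‖D‖ := norm_nonneg _
  have h1α : (0:ℝ) < 1 + α := by linarith
  have hstep' : τ * ‖D‖ * (1 + α) ≤ 2 * δ := by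
    rw [div_eq_mul_inv] at hstep
    calc τ * ‖D‖ * (1 + α) ≤ (2 * δ * (1 + α)⁻¹) * (1 + α) :=
          mul_le_mul_of_nonneg_right hstep h1α.le
      _ = 2 * δ := by field_simp
  -- expansion of R applied
  have hRapp : ∀ x : H, R x = x - (α * τ / δ) • D x
      + (α * (1 + α) * τ ^ 2 / (2 * δ ^ 2)) • D (D x) := by
    intro x
    rw [hR]
    rfl
  -- symmetry of R
  have hRsym : ∀ x y : H, ⟪R x, y⟫ = ⟪R y, x⟫ := by
    intro x y
    rw [hRapp x, hRapp y]
    simp only [inner_add_left, inner_sub_left, real_inner_smul_left]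
    rw [hSym x y, hSym (D x) y, hSym (D y) x, real_inner_comm x (D y),
      real_inner_comm x y, real_inner_comm (D x) (D y)]
  -- the quadratic form bound
  have hbound : ∀ x : H, |⟪R x, x⟫| ≤ ‖x‖ ^ 2 := by
    intro x
    set s := ‖x‖ with hs
    set t := ‖D x‖ with ht
    set p : ℝ := ⟪D x, x⟫ with hp
    have hp0 : 0 ≤ p := hDpos x
    have ht0 : 0 ≤ t := norm_nonneg _
    have hcs : p ≤ t * s := by
      have := real_inner_le_norm (D x) x
      simpa [hp, ht, hs] using this
    -- semi-Cauchy-Schwarz : t^2 ≤ ‖D‖ * p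
    have hq : t ^ 2 ≤ ‖D‖ * p := by
      set r : ℝ := ⟪D (D x), D x⟫ with hr
      have hr0 : 0 ≤ r := hDpos (D x)
      have hrle : r ≤ ‖D‖ * t ^ 2 := by
        have h1 : r ≤ ‖D (D x)‖ * ‖D x‖ := real_inner_le_norm _ _
        have h2 : ‖D (D x)‖ ≤ ‖D‖ * ‖D x‖ := D.le_opNorm _
        nlinarith
      have hquad : ∀ lam : ℝ, 0 ≤ r * (lam * lam) + (2 * t ^ 2) * lam + p := by
        intro lam
        have h := hDpos (x + lam • D x)
        have hx1 : ⟪D (x + lam • D x), x + lam • D x⟫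
            = p + lam * ⟪D x, D x⟫ + lam * ⟪D (D x), x⟫ + lam * lam * r := by
          simp only [map_add, map_smul, inner_add_left, inner_add_right,
            real_inner_smul_left, real_inner_smul_right]
          ring
        have hx2 : ⟪D (D x), x⟫ = ⟪D x, D x⟫ := by
          rw [hSym (D x) x, real_inner_comm]
        have hx3 : ⟪D x, D x⟫ = t ^ 2 := by
          rw [real_inner_self_eq_norm_sq]
        rw [hx1, hx2, hx3] at h
        nlinarith [h]
      have hdisc := discrim_le_zero hquad
      rw [discrim] at hdisc
      -- (2 t²)² - 4 r p ≤ 0, so t⁴ ≤ r p ≤ ‖D‖ t² p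
      rcases eq_or_lt_of_le (sq_nonneg t) with h0 | h0
      · nlinarith
      · have h5 : t ^ 2 * t ^ 2 ≤ (‖D‖ * p) * t ^ 2 := by nlinarith
        exact le_of_mul_le_mul_right h5 h0
    -- the value of the quadratic form, denominators cleared
    have hinner : 2 * δ ^ 2 * ⟪R x, x⟫
        = 2 * δ ^ 2 * s ^ 2 - 2 * δ * α * τ * p + α * (1 + α) * τ ^ 2 * t ^ 2 := by
      rw [hRapp x]
      simp only [inner_add_left, inner_sub_left, real_inner_smul_left]
      have hx2 : ⟪D (D x), x⟫ = t ^ 2 := by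
        rw [hSym (D x) x, real_inner_comm, real_inner_self_eq_norm_sq]
      rw [hx2, real_inner_self_eq_norm_sq, ← hs, ← hp]
      field_simp
    have hδ2 : (0:ℝ) < 2 * δ ^ 2 := by positivity
    -- upper bound : b q ≤ a p
    have hup : 2 * δ ^ 2 * ⟪R x, x⟫ ≤ 2 * δ ^ 2 * s ^ 2 := by
      rw [hinner]
      have h1 : α * (1 + α) * τ ^ 2 * t ^ 2 ≤ α * (1 + α) * τ ^ 2 * (‖D‖ * p) :=
        mul_le_mul_of_nonneg_left hq (by positivity)
      have h2 : (α * τ * p) * (τ * ‖D‖ * (1 + α)) ≤ (α * τ * p) * (2 * δ) :=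
        mul_le_mul_of_nonneg_left hstep' (by positivity)
      nlinarith
    -- lower bound
    have hlo : -(2 * δ ^ 2 * s ^ 2) ≤ 2 * δ ^ 2 * ⟪R x, x⟫ := by
      rw [hinner]
      have h3 : 2 * δ * α * τ * p ≤ 2 * δ * α * τ * (t * s) :=
        mul_le_mul_of_nonneg_left hcs (by positivity)
      nlinarith [sq_nonneg (2 * δ * s - α * τ * t), mul_nonneg hα.le (sq_nonneg (τ * t))]
    rw [abs_le]
    constructor
    · have : 2 * δ ^ 2 * (-(s ^ 2)) ≤ 2 * δ ^ 2 * ⟪R x, x⟫ := by linarith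
      simpa [hs] using (mul_le_mul_iff_right₀ hδ2).mp this
    · exact (mul_le_mul_iff_right₀ hδ2).mp hup
  exact sym_quadform_contraction R hRsym hbound
end
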